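/- Starting from the equally spaced configuration (1, 2, ..., n), the time needed for the HK dynamics to freeze is at least n/2. -/

import Mathlib

open scoped Classical

/-- The Hegselmann-Krause update with confidence bound 1. -/
noncomputable def hkUpdate {n : ℕ} (x : Fin n → ℝ) : Fin n → ℝ := fun i =>
  (∑ j ∈ Finset.univ.filter (fun j => |x j - x i| ≤ 1), x j) /
    ((Finset.univ.filter (fun j => |x j - x i| ≤ 1)).card : ℝ)

namespace HKaux

variable {n : ℕ}


lemma self_mem (x : Fin n → ℝ) (i : Fin n) :
    i ∈ Finset.univ.filter (fun j => |x j - x i| ≤ 1) := by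
  simp

lemma fixed_eq_of_close (x : Fin n → ℝ) (hx : hkUpdate x = x) (i j : Fin n)
    (h : |x i - x j| ≤ 1) : x i = x j := by
  by_contra hne
  set A : Finset (Fin n) :=
    Finset.univ.filter (fun a => ∃ b, |x a - x b| ≤ 1 ∧ x a ≠ x b) with hA
  have hiA : i ∈ A := by
    simp only [hA, Finset.mem_filter, Finset.mem_univ, true_and]
    exact ⟨j, h, hne⟩
  obtain ⟨i₀, hi₀A, hmin⟩ := Finset.exists_min_image A x ⟨i, hiA⟩
  have hi₀ : ∃ b, |x i₀ - x b| ≤ 1 ∧ x i₀ ≠ x b := by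
    simpa only [hA, Finset.mem_filter, Finset.mem_univ, true_and] using hi₀A
  obtain ⟨j₀, hj₀, hne₀⟩ := hi₀
  have hge : ∀ k : Fin n, |x k - x i₀| ≤ 1 → x i₀ ≤ x k := by
    intro k hk
    by_contra hlt
    push_neg at hlt
    have hkA : k ∈ A := by
      simp only [hA, Finset.mem_filter, Finset.mem_univ, true_and]
      exact ⟨i₀, hk, ne_of_lt hlt⟩
    exact absurd (hmin k hkA) (not_le.mpr hlt)
  have hj₀gt : x i₀ < x j₀ := by
    have h1 := hge j₀ (by rwa [abs_sub_comm] at hj₀)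
    exact lt_of_le_of_ne h1 hne₀
  set S := Finset.univ.filter (fun k => |x k - x i₀| ≤ 1) with hS
  have hj₀S : j₀ ∈ S := by
    simp only [hS, Finset.mem_filter, Finset.mem_univ, true_and]
    rwa [abs_sub_comm] at hj₀
  have hall : ∀ k ∈ S, x i₀ ≤ x k := by
    intro k hk
    exact hge k (by simpa only [hS, Finset.mem_filter, Finset.mem_univ, true_and] using hk)
  have hsum : (S.card : ℝ) * x i₀ < ∑ k ∈ S, x k := by
    have h1 : ∑ _k ∈ S, x i₀ < ∑ k ∈ S, x k :=
      Finset.sum_lt_sum hall ⟨j₀, hj₀S, hj₀gt⟩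
    simpa [Finset.sum_const, nsmul_eq_mul] using h1
  have hcard : 0 < S.card := Finset.card_pos.mpr ⟨i₀, by simp [hS]⟩
  have hcardR : (0:ℝ) < (S.card : ℝ) := by exact_mod_cast hcard
  have hup : hkUpdate x i₀ = x i₀ := congrFun hx i₀
  simp only [hkUpdate] at hup
  rw [div_eq_iff (ne_of_gt hcardR)] at hup
  rw [hup] at hsum
  nlinarith [hsum]

lemma symm_step (x : Fin n → ℝ) (c : ℝ) (h : ∀ i : Fin n, x i + x i.rev = c) :
    ∀ i : Fin n, hkUpdate x i + hkUpdate x i.rev = c := by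
  intro i
  have hx : ∀ k : Fin n, x k.rev = c - x k := fun k => by have := h k; linarith
  set S := Finset.univ.filter (fun j => |x j - x i| ≤ 1) with hSdef
  have himg : Finset.univ.filter (fun j => |x j - x i.rev| ≤ 1) = S.image Fin.rev := by
    ext k
    simp only [Finset.mem_filter, Finset.mem_univ, true_and, Finset.mem_image, hSdef]
    constructor
    · intro hk
      refine ⟨k.rev, ?_, Fin.rev_rev k⟩
      have h2 : x k.rev - x i = -(x k - x i.rev) := by rw [hx k, hx i]; ring
      rw [h2, abs_neg]; exact hk
    · rintro ⟨m, hm, rfl⟩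
      have h2 : x m.rev - x i.rev = -(x m - x i) := by rw [hx m, hx i]; ring
      rw [h2, abs_neg]; exact hm
  have hinj : ∀ a ∈ S, ∀ b ∈ S, Fin.rev a = Fin.rev b → a = b := by
    intro a _ b _ hab; exact Fin.rev_injective hab
  have hcard : (S.image Fin.rev).card = S.card := Finset.card_image_of_injOn
    (fun a _ b _ hab => Fin.rev_injective hab)
  have hsum : ∑ k ∈ S.image Fin.rev, x k = ∑ m ∈ S, x m.rev := Finset.sum_image hinj
  have hsum2 : ∑ m ∈ S, x m.rev = (S.card : ℝ) * c - ∑ m ∈ S, x m := by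
    rw [Finset.sum_congr rfl (fun m _ => hx m), Finset.sum_sub_distrib,
      Finset.sum_const, nsmul_eq_mul]
  have hcardpos : (0:ℝ) < (S.card : ℝ) := by
    exact_mod_cast Finset.card_pos.mpr ⟨i, self_mem x i⟩
  simp only [hkUpdate]
  rw [himg, hcard, hsum, hsum2]
  simp only [← hSdef]
  field_simp
  ring

lemma avg_lt (x : Fin n → ℝ) (i : Fin n) (c : ℝ)
    (h : ∀ k : Fin n, |x k - x i| ≤ 1 → x k ≤ c) (hi : x i < c) :
    hkUpdate x i < c := by
  set S := Finset.univ.filter (fun j => |x j - x i| ≤ 1) with hS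
  have hiS : i ∈ S := self_mem x i
  have hcard : (0:ℝ) < (S.card : ℝ) := by
    exact_mod_cast Finset.card_pos.mpr ⟨i, hiS⟩
  have hsum : ∑ k ∈ S, x k < (S.card : ℝ) * c := by
    have h1 : ∑ k ∈ S, x k < ∑ _k ∈ S, c := by
      refine Finset.sum_lt_sum (fun k hk => ?_) ⟨i, hiS, hi⟩
      exact h k (by simpa only [hS, Finset.mem_filter, Finset.mem_univ, true_and] using hk)
    simpa [Finset.sum_const, nsmul_eq_mul] using h1
  simp only [hkUpdate]
  rw [div_lt_iff₀ hcard]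
  linarith



lemma hk_three (x : Fin n → ℝ) (i a b c : Fin n)
    (hset : Finset.univ.filter (fun j => |x j - x i| ≤ 1) = {a, b, c})
    (hab : a ≠ b) (hac : a ≠ c) (hbc : b ≠ c) :
    hkUpdate x i = (x a + x b + x c) / 3 := by
  simp only [hkUpdate, hset]
  rw [Finset.sum_insert (by simp [hab, hac]), Finset.sum_insert (by simp [hbc]),
    Finset.sum_singleton,
    Finset.card_insert_of_notMem (by simp [hab, hac]),
    Finset.card_insert_of_notMem (by simp [hbc]), Finset.card_singleton]
  norm_num
  ring

lemma hk_two (x : Fin n → ℝ) (i a b : Fin n)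
    (hset : Finset.univ.filter (fun j => |x j - x i| ≤ 1) = {a, b})
    (hab : a ≠ b) :
    hkUpdate x i = (x a + x b) / 2 := by
  simp only [hkUpdate, hset]
  rw [Finset.sum_insert (by simp [hab]), Finset.sum_singleton,
    Finset.card_insert_of_notMem (by simp [hab]), Finset.card_singleton]
  norm_num

lemma invariant (n : ℕ) (x0 : Fin n → ℝ) (hx0 : ∀ i : Fin n, x0 i = (i : ℕ) + 1) :
    ∀ t : ℕ, 2 * t + 1 ≤ n →
      (∀ i : Fin n, (hkUpdate^[t] x0) i + (hkUpdate^[t] x0) i.rev = (n : ℝ) + 1) ∧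
      (∀ i : Fin n, t ≤ (i : ℕ) → (i : ℕ) + t + 1 ≤ n →
        (hkUpdate^[t] x0) i = (i : ℕ) + 1) ∧
      (∀ j : Fin n, (j : ℕ) + 2 ≤ t → (hkUpdate^[t] x0) j < (t : ℝ)) ∧
      (∀ j : Fin n, (j : ℕ) + 1 = t →
        (t : ℝ) < (hkUpdate^[t] x0) j ∧ (hkUpdate^[t] x0) j < (t : ℝ) + 1) := by
  intro t
  induction t with
  | zero =>
    intro hn1
    refine ⟨?_, ?_, ?_, ?_⟩
    · intro i
      simp only [Function.iterate_zero, id_eq]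
      rw [hx0 i, hx0 i.rev, Fin.val_rev]
      have h1 : (i : ℕ) + 1 ≤ n := i.isLt
      rw [Nat.cast_sub h1]; push_cast; ring
    · intro i _ _
      simp only [Function.iterate_zero, id_eq]
      exact hx0 i
    · intro j hj; omega
    · intro j hj; omega
  | succ t ih =>
    intro hn
    have hn' : 2 * t + 1 ≤ n := by omega
    obtain ⟨hS, hM, hPa, hB⟩ := ih hn'
    set y := hkUpdate^[t] x0 with hy
    have hz : hkUpdate^[t+1] x0 = hkUpdate y := Function.iterate_succ_apply' hkUpdate t x0
    -- derived bounds
    have hub : ∀ j : Fin n, (j : ℕ) < t → y j < (t : ℝ) + 1 := by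
      intro j hj
      by_cases h : (j : ℕ) + 1 = t
      · exact (hB j h).2
      · have := hPa j (by omega); linarith
    have hrev_lt : ∀ j : Fin n, n ≤ (j : ℕ) + t → (n : ℝ) - t < y j := by
      intro j hj
      have h1 : (j.rev : ℕ) < t := by rw [Fin.val_rev]; omega
      have h2 := hub _ h1
      have h3 := hS j
      linarith
    refine ⟨?_, ?_, ?_, ?_⟩
    -- (S) symmetry
    · intro i
      rw [hz]
      exact symm_step y ((n:ℝ)+1) hS i
    -- (M) window
    · intro i hti hitn
      have hi0 : 1 ≤ (i : ℕ) := by omega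
      have hilt : (i : ℕ) + 1 < n := by omega
      have him0 : (i : ℕ) - 1 < n := by omega
      set im : Fin n := ⟨(i : ℕ) - 1, him0⟩ with him
      set ip : Fin n := ⟨(i : ℕ) + 1, hilt⟩ with hip
      have hyi : y i = (i : ℕ) + 1 := hM i (by omega) (by omega)
      have hyim : y im = (i : ℕ) := by
        have h1 := hM im (by simp only [him]; omega) (by simp only [him]; omega)
        rw [h1]
        have h' : (im : ℕ) = (i:ℕ) - 1 := rfl
        rw [h', Nat.cast_sub hi0]; norm_num
      have hyip : y ip = ((i : ℕ) : ℝ) + 2 := by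
        have h1 := hM ip (by simp only [hip]; omega) (by simp only [hip]; omega)
        rw [h1]
        simp only [hip]
        push_cast; ring
      have hset : Finset.univ.filter (fun k => |y k - y i| ≤ 1) = {im, i, ip} := by
        ext k
        simp only [Finset.mem_filter, Finset.mem_univ, true_and, Finset.mem_insert,
          Finset.mem_singleton]
        constructor
        · intro hk
          rw [hyi, abs_le] at hk
          obtain ⟨hk1, hk2⟩ := hk
          have hti' : ((t:ℕ) : ℝ) + 1 ≤ ((i:ℕ) : ℝ) := by exact_mod_cast hti
          rcases (by omega : (k:ℕ)+2 ≤ t ∨ (k:ℕ)+1 = t ∨ ((t ≤ (k:ℕ)) ∧ (k:ℕ)+t+1 ≤ n)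
              ∨ n ≤ (k:ℕ)+t) with h|h|⟨h1,h2⟩|h
          · have := hPa k h; exfalso; linarith
          · have := (hB k h).2; exfalso; linarith
          · have hyk := hM k h1 h2
            rw [hyk] at hk1 hk2
            have hc1 : (i:ℕ) ≤ (k:ℕ) + 1 := by exact_mod_cast (by linarith : ((i:ℕ):ℝ) ≤ ((k:ℕ):ℝ) + 1)
            have hc2 : (k:ℕ) + 1 ≤ (i:ℕ) + 2 := by exact_mod_cast (by linarith : ((k:ℕ):ℝ) + 1 ≤ ((i:ℕ):ℝ) + 2)
            rcases (by omega : (k:ℕ) = (i:ℕ) - 1 ∨ (k:ℕ) = (i:ℕ) ∨ (k:ℕ) = (i:ℕ) + 1) with h'|h'|h'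
            · left; apply Fin.ext; simp only [him]; exact h'
            · right; left; apply Fin.ext; exact h'
            · right; right; apply Fin.ext; simp only [hip]; exact h'
          · exfalso
            have h1 := hrev_lt k h
            have h2 : ((i:ℕ):ℝ) + t + 2 ≤ (n:ℝ) := by exact_mod_cast (by omega : (i:ℕ) + t + 2 ≤ n)
            linarith
        · intro hk
          rcases hk with rfl|rfl|rfl
          · rw [hyim, hyi]
            have : ((i:ℕ):ℝ) - (((i:ℕ):ℝ) + 1) = -1 := by ring
            rw [this, abs_neg, abs_one]
          · simp
          · rw [hyip, hyi]
            have : ((i:ℕ):ℝ) + 2 - (((i:ℕ):ℝ) + 1) = 1 := by ring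
            rw [this, abs_one]
      have hne1 : im ≠ i := by
        intro hcon; have := congrArg Fin.val hcon; simp only [him] at this; omega
      have hne2 : im ≠ ip := by
        intro hcon; have := congrArg Fin.val hcon; simp only [him, hip] at this; omega
      have hne3 : i ≠ ip := by
        intro hcon; have := congrArg Fin.val hcon; simp only [hip] at this; omega
      rw [hz, hk_three y i im i ip hset hne1 hne2 hne3, hyim, hyi, hyip]
      push_cast
      ring
    -- (Pa)
    · intro j hj2
      rw [hz]
      have hgoal : hkUpdate y j < (t:ℝ) + 1 := by
        by_cases hcase : (j:ℕ) + 2 ≤ t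
        · -- y j < t, all neighbors < t+1
          have hyj := hPa j hcase
          refine avg_lt y j ((t:ℝ)+1) (fun k hk => ?_) (by linarith)
          have := (abs_le.1 hk).2
          linarith
        · have hj1 : (j:ℕ) + 1 = t := by omega
          obtain ⟨hBj1, hBj2⟩ := hB j hj1
          refine avg_lt y j ((t:ℝ)+1) (fun k hk => ?_) (by linarith)
          have hk2 := (abs_le.1 hk).2
          rcases (by omega : (k:ℕ)+2 ≤ t ∨ (k:ℕ)+1 = t ∨ ((t ≤ (k:ℕ)) ∧ (k:ℕ)+t+1 ≤ n)
              ∨ n ≤ (k:ℕ)+t) with h|h|⟨h1,h2⟩|h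
          · have := hPa k h; linarith
          · have := (hB k h).2; linarith
          · have hyk := hM k h1 h2
            rw [hyk] at hk2 ⊢
            have hreal : ((k:ℕ):ℝ) + 1 < ((t:ℕ):ℝ) + 2 := by linarith
            have hnat : (k:ℕ) + 1 < t + 2 := by exact_mod_cast hreal
            have : ((k:ℕ):ℝ) ≤ ((t:ℕ):ℝ) := by exact_mod_cast (by omega : (k:ℕ) ≤ t)
            linarith
          · exfalso
            have h1 := hrev_lt k h
            have h2 : ((2*t+3 : ℕ):ℝ) ≤ (n:ℝ) := Nat.cast_le.mpr (by omega)
            push_cast at h2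
            linarith
      calc hkUpdate y j < (t:ℝ) + 1 := hgoal
        _ = ((t+1 : ℕ) : ℝ) := by push_cast; ring
    -- (B)
    · intro j hj1
      have hjt : (j:ℕ) = t := by omega
      have hyj : y j = (t:ℝ) + 1 := by
        have h1 := hM j (by omega) (by omega)
        rw [h1, hjt]
      rcases Nat.eq_zero_or_pos t with ht0 | htpos
      · -- t = 0
        subst ht0
        have h1n : 1 < n := by omega
        set jp : Fin n := ⟨1, h1n⟩ with hjp
        have hj0 : (j:ℕ) = 0 := hjt
        have hyjp : y jp = 2 := by
          have h1 := hM jp (by omega) (by simp only [hjp]; omega)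
          rw [h1]; simp only [hjp]; norm_num
        have hset : Finset.univ.filter (fun k => |y k - y j| ≤ 1) = {j, jp} := by
          ext k
          simp only [Finset.mem_filter, Finset.mem_univ, true_and, Finset.mem_insert,
            Finset.mem_singleton]
          constructor
          · intro hk
            rw [hyj, abs_le] at hk
            obtain ⟨hk1, hk2⟩ := hk
            norm_num at hk1 hk2
            have hyk := hM k (by omega) (by omega)
            rw [hyk] at hk2
            have hc : (k:ℕ) + 1 ≤ 2 := by exact_mod_cast (by linarith : ((k:ℕ):ℝ) + 1 ≤ 2)
            rcases (by omega : (k:ℕ) = 0 ∨ (k:ℕ) = 1) with h'|h'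
            · left; apply Fin.ext; rw [h', hj0]
            · right; apply Fin.ext; simp only [hjp]; exact h'
          · intro hk
            rcases hk with rfl|rfl
            · simp
            · rw [hyjp, hyj]; norm_num
        have hne : j ≠ jp := by
          intro hcon; have := congrArg Fin.val hcon; simp only [hjp] at this; omega
        rw [hz, hk_two y j j jp hset hne, hyj, hyjp]
        norm_num
      · -- t ≥ 1
        have hjm0 : t - 1 < n := by omega
        have hjplt : t + 1 < n := by omega
        set jm : Fin n := ⟨t - 1, hjm0⟩ with hjm
        set jp : Fin n := ⟨t + 1, hjplt⟩ with hjp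
        have hBjm := hB jm (by simp only [hjm]; omega)
        have hyjp : y jp = (t:ℝ) + 2 := by
          have h1 := hM jp (by simp only [hjp]; omega) (by simp only [hjp]; omega)
          rw [h1]; simp only [hjp]; push_cast; ring
        have hset : Finset.univ.filter (fun k => |y k - y j| ≤ 1) = {jm, j, jp} := by
          ext k
          simp only [Finset.mem_filter, Finset.mem_univ, true_and, Finset.mem_insert,
            Finset.mem_singleton]
          constructor
          · intro hk
            rw [hyj, abs_le] at hk
            obtain ⟨hk1, hk2⟩ := hk
            rcases (by omega : (k:ℕ)+2 ≤ t ∨ (k:ℕ)+1 = t ∨ ((t ≤ (k:ℕ)) ∧ (k:ℕ)+t+1 ≤ n)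
                ∨ n ≤ (k:ℕ)+t) with h|h|⟨h1,h2⟩|h
            · have := hPa k h; exfalso; linarith
            · left; apply Fin.ext; simp only [hjm]; omega
            · have hyk := hM k h1 h2
              rw [hyk] at hk1 hk2
              have hc2 : (k:ℕ) + 1 ≤ t + 2 := by
                exact_mod_cast (by linarith : ((k:ℕ):ℝ) + 1 ≤ ((t:ℕ):ℝ) + 2)
              rcases (by omega : (k:ℕ) = t ∨ (k:ℕ) = t + 1) with h'|h'
              · right; left; apply Fin.ext; rw [h', hjt]
              · right; right; apply Fin.ext; simp only [hjp]; exact h'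
            · exfalso
              have hl := hrev_lt k h
              have h2 : ((2*t+3 : ℕ):ℝ) ≤ (n:ℝ) := Nat.cast_le.mpr (by omega)
              push_cast at h2
              linarith
          · intro hk
            rcases hk with rfl|rfl|rfl
            · rw [hyj, abs_le]
              constructor <;> linarith [hBjm.1, hBjm.2]
            · simp
            · rw [hyjp, hyj]
              have : ((t:ℕ):ℝ) + 2 - (((t:ℕ):ℝ) + 1) = 1 := by ring
              rw [this, abs_one]
        have hne1 : jm ≠ j := by
          intro hcon; have := congrArg Fin.val hcon; simp only [hjm] at this; omega
        have hne2 : jm ≠ jp := by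
          intro hcon; have := congrArg Fin.val hcon; simp only [hjm, hjp] at this; omega
        have hne3 : j ≠ jp := by
          intro hcon; have := congrArg Fin.val hcon; simp only [hjp] at this; omega
        rw [hz, hk_three y j jm j jp hset hne1 hne2 hne3, hyj, hyjp]
        obtain ⟨hb1, hb2⟩ := hBjm
        constructor
        · push_cast
          rw [lt_div_iff₀ (by norm_num : (0:ℝ) < 3)]
          linarith
        · push_cast
          rw [div_lt_iff₀ (by norm_num : (0:ℝ) < 3)]
          linarith


end HKaux

/-- Starting from (1,2,...,n) with n ≥ 2, the HK dynamics take time at least n/2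
to freeze: any time t at which the configuration is a fixed point satisfies
t ≥ n/2. -/
theorem hk_equally_spaced_freezing_time_lower (n : ℕ) (hn : 2 ≤ n)
    (x0 : Fin n → ℝ) (hx0 : ∀ i : Fin n, x0 i = (i : ℕ) + 1) :
    ∀ t : ℕ, hkUpdate^[t + 1] x0 = hkUpdate^[t] x0 → (n : ℝ) / 2 ≤ t := by
  intro t hfix
  by_contra hlt
  push_neg at hlt
  have h2t : 2 * t + 1 ≤ n := by
    have h1 : (2 * t : ℝ) < n := by linarith
    have h2 : 2 * t < n := by exact_mod_cast h1
    omega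
  obtain ⟨hS, hM, hPa, hB⟩ := HKaux.invariant n x0 hx0 t h2t
  set y := hkUpdate^[t] x0 with hy
  have hfix' : hkUpdate y = y :=
    (Function.iterate_succ_apply' hkUpdate t x0).symm.trans hfix
  rcases Nat.eq_zero_or_pos t with ht0 | htpos
  · subst ht0
    have h0n : 0 < n := by omega
    have h1n : 1 < n := by omega
    set i0 : Fin n := ⟨0, h0n⟩ with hi0
    set i1 : Fin n := ⟨1, h1n⟩ with hi1
    have hi0v : (i0 : ℕ) = 0 := rfl
    have hi1v : (i1 : ℕ) = 1 := rfl
    have hv0 : y i0 = 1 := by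
      have h1 := hM i0 (by omega) (by omega)
      rw [h1, hi0v]; norm_num
    have hv1 : y i1 = 2 := by
      have h1 := hM i1 (by omega) (by omega)
      rw [h1, hi1v]; norm_num
    have e := HKaux.fixed_eq_of_close y hfix' i0 i1 (by rw [hv0, hv1]; norm_num)
    rw [hv0, hv1] at e
    norm_num at e
  · have hjm0 : t - 1 < n := by omega
    have hjt0 : t < n := by omega
    set jm : Fin n := ⟨t - 1, hjm0⟩ with hjm
    set jt : Fin n := ⟨t, hjt0⟩ with hjt
    have hjmv : (jm : ℕ) = t - 1 := rfl
    have hjtv : (jt : ℕ) = t := rfl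
    obtain ⟨hb1, hb2⟩ := hB jm (by omega)
    have hv2 : y jt = (t : ℝ) + 1 := by
      have h1 := hM jt (by omega) (by omega)
      rw [h1, hjtv]
    have e := HKaux.fixed_eq_of_close y hfix' jt jm (by
      rw [hv2, abs_le]
      constructor <;> linarith)
    rw [hv2] at e
    linarith
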